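/- Characterization of 𝒜(A_R) (equation (1.5) of Theorem 1.8): Let R > 1, let A_R = {w ∈ ℂ : 1/R < |w| < R}, let ℍ = {z ∈ ℂ : Im z > 0} be the upper half-plane, and let π : ℍ → A_R be the universal covering map π(z) = exp((2i·(log R)/π)·Log(z/i)), where Log is the principal branch of the complex logarithm. Then for a function f : A_R → ℂ the following are equivalent: (1) there exists F : ℂ × ℂ → ℂ defining a holomorphic function on G such that f(π(z)) = F(z, conj z) for all z ∈ ℍ; (2) there exists an entire function g : ℂ → ℂ such that f(w) = g(−i·tan((π/(2·log R))·log|w|)) for all w ∈ A_R (here log|w| and tan are real, and (π/(2·log R))·log|w| ∈ (−π/2, π/2) for w ∈ A_R). -/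

import Mathlib

/-- `F : ℂ × ℂ → ℂ` defines a holomorphic function on
`G = Ĉ² \ diagonal`, expressed in the standard affine charts. -/
def DefinesHolomorphicOnG (F : ℂ × ℂ → ℂ) : Prop :=
  DifferentiableOn ℂ F {p : ℂ × ℂ | p.1 ≠ p.2} ∧
  (∃ F₂ : ℂ × ℂ → ℂ, DifferentiableOn ℂ F₂ {p : ℂ × ℂ | p.1 * p.2 ≠ 1} ∧
    ∀ z v : ℂ, v ≠ 0 → z * v ≠ 1 → F₂ (z, v) = F (z, 1 / v)) ∧
  (∃ F₃ : ℂ × ℂ → ℂ, DifferentiableOn ℂ F₃ {p : ℂ × ℂ | p.1 * p.2 ≠ 1} ∧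
    ∀ u w : ℂ, u ≠ 0 → u * w ≠ 1 → F₃ (u, w) = F (1 / u, w))

namespace MemAAux

open Complex

noncomputable def pmap (R : ℝ) (z : ℂ) : ℂ :=
  Complex.exp ((2 * Complex.I * (Real.log R : ℂ) / (Real.pi : ℂ)) * Complex.log (z / Complex.I))

lemma div_I_re (z : ℂ) : (z / Complex.I).re = z.im := by
  simp [Complex.div_I, Complex.mul_re]

lemma div_I_im (z : ℂ) : (z / Complex.I).im = -z.re := by
  simp [Complex.div_I, Complex.mul_im]

lemma log_abs_pmap (R : ℝ) {z : ℂ} (hz : 0 < z.im) :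
    Real.log (‖pmap R z‖) =
      -(2 * Real.log R / Real.pi) * Complex.arg (z / Complex.I) := by
  rw [pmap, Complex.norm_exp, Real.log_exp]
  have h1 : (2 * Complex.I * (Real.log R : ℂ) / (Real.pi : ℂ)) =
      ((2 * Real.log R / Real.pi : ℝ) : ℂ) * Complex.I := by
    push_cast; ring
  rw [h1, mul_assoc, Complex.re_ofReal_mul]
  simp [Complex.mul_re, Complex.log_im]

lemma abs_arg_div_I_lt (z : ℂ) (hz : 0 < z.im) : |Complex.arg (z / Complex.I)| < Real.pi / 2 :=
  Complex.abs_arg_lt_pi_div_two_iff.2 (Or.inl (by rw [div_I_re]; exact hz))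

lemma abs_log_abs_pmap_lt {R : ℝ} (hR : 1 < R) {z : ℂ} (hz : 0 < z.im) :
    |Real.log (‖pmap R z‖)| < Real.log R := by
  have ha : 0 < Real.log R := Real.log_pos hR
  rw [log_abs_pmap R hz, abs_mul, abs_neg, abs_div]
  have h2 := abs_arg_div_I_lt z hz
  have hπ : 0 < Real.pi := Real.pi_pos
  calc |2 * Real.log R| / |Real.pi| * |Complex.arg (z / Complex.I)|
      < (2 * Real.log R) / Real.pi * (Real.pi / 2) := by
        rw [abs_of_pos hπ, abs_of_pos (mul_pos two_pos ha)]
        exact mul_lt_mul_of_pos_left h2 (by positivity : (0:ℝ) < 2 * Real.log R / Real.pi)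
    _ = Real.log R := by field_simp

lemma pmap_mem_annulus {R : ℝ} (hR : 1 < R) {z : ℂ} (hz : 0 < z.im) :
    1 / R < ‖pmap R z‖ ∧ ‖pmap R z‖ < R := by
  have h := abs_log_abs_pmap_lt hR hz
  rw [abs_lt] at h
  have hpos : 0 < ‖pmap R z‖ := by
    rw [pmap, Complex.norm_exp]; exact Real.exp_pos _
  have hR0 : (0:ℝ) < R := lt_trans one_pos hR
  constructor
  · have := Real.exp_lt_exp.2 h.1
    rwa [Real.exp_log hpos, Real.exp_neg, Real.exp_log hR0, ← one_div] at this
  · have := Real.exp_lt_exp.2 h.2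
    rwa [Real.exp_log hpos, Real.exp_log hR0] at this


lemma tan_identity {R : ℝ} (hR : 1 < R) {z : ℂ} (hz : 0 < z.im) :
    -Complex.I * (Real.tan ((Real.pi / (2 * Real.log R)) *
        Real.log (‖pmap R z‖)) : ℂ) =
      (z + (starRingEnd ℂ) z) / (z - (starRingEnd ℂ) z) := by
  have ha : 0 < Real.log R := Real.log_pos hR
  have hπ : Real.pi ≠ 0 := Real.pi_ne_zero
  have h1 : (Real.pi / (2 * Real.log R)) * Real.log (‖pmap R z‖)
      = -Complex.arg (z / Complex.I) := by
    rw [log_abs_pmap R hz]; field_simp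
  have h2 : Real.tan (-Complex.arg (z / Complex.I)) = z.re / z.im := by
    rw [Real.tan_neg, Complex.tan_arg, div_I_re, div_I_im]
    rw [neg_div, neg_neg]
  rw [h1, h2, Complex.add_conj, Complex.sub_conj]
  have him : z.im ≠ 0 := ne_of_gt hz
  have himC : ((z.im : ℝ) : ℂ) ≠ 0 := Complex.ofReal_ne_zero.2 him
  push_cast
  field_simp
  linear_combination (-(z.re:ℂ)) * Complex.I_sq

lemma log_pos_real_mul {r : ℝ} (hr : 0 < r) {x : ℂ} (hx : x ≠ 0) :
    Complex.log ((r:ℂ) * x) = (Real.log r : ℂ) + Complex.log x := by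
  apply Complex.ext
  · simp only [Complex.log_re, Complex.add_re, Complex.ofReal_re, norm_mul, Complex.norm_of_nonneg hr.le,
      abs_of_pos hr]
    rw [Real.log_mul (ne_of_gt hr) (norm_ne_zero_iff.2 hx)]
  · simp only [Complex.log_im, Complex.add_im, Complex.ofReal_im, zero_add]
    exact Complex.arg_real_mul x hr

lemma pmap_deck {R : ℝ} (hR : 1 < R) {z : ℂ} (hz : 0 < z.im) :
    pmap R (((Real.exp (Real.pi ^ 2 / Real.log R) : ℝ) : ℂ) * z) = pmap R z := by
  have ha : 0 < Real.log R := Real.log_pos hR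
  have haC : ((Real.log R : ℝ) : ℂ) ≠ 0 := Complex.ofReal_ne_zero.2 (ne_of_gt ha)
  have hπC : ((Real.pi : ℝ) : ℂ) ≠ 0 := Complex.ofReal_ne_zero.2 Real.pi_ne_zero
  have hz0 : z ≠ 0 := by
    intro h; rw [h] at hz; simp at hz
  have hzI : z / Complex.I ≠ 0 :=
    div_ne_zero hz0 Complex.I_ne_zero
  set μ : ℝ := Real.exp (Real.pi ^ 2 / Real.log R) with hμdef
  have hμ : 0 < μ := Real.exp_pos _
  have h1 : ((μ:ℂ) * z) / Complex.I = (μ:ℂ) * (z / Complex.I) := by ring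
  rw [pmap, h1, log_pos_real_mul hμ hzI, mul_add, Complex.exp_add]
  have h2 : (2 * Complex.I * (Real.log R : ℂ) / (Real.pi : ℂ)) * (Real.log μ : ℂ)
      = 2 * (Real.pi : ℂ) * Complex.I := by
    have h3 : Real.log μ = Real.pi ^ 2 / Real.log R := Real.log_exp _
    rw [h3]; push_cast
    field_simp
  rw [h2, Complex.exp_two_pi_mul_I, one_mul, pmap]

lemma exists_lift {R : ℝ} (hR : 1 < R) {w : ℂ} (h1 : 1 / R < ‖w‖)
    (h2 : ‖w‖ < R) : ∃ z : ℂ, 0 < z.im ∧ pmap R z = w := by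
  have ha : 0 < Real.log R := Real.log_pos hR
  have hR0 : (0:ℝ) < R := lt_trans one_pos hR
  have hwpos : 0 < ‖w‖ := lt_trans (by positivity) h1
  have hw0 : w ≠ 0 := by
    intro h; rw [h] at hwpos; simp at hwpos
  set ξ := Complex.log w with hξdef
  set η : ℂ := ((Real.pi / (2 * Real.log R) : ℝ) : ℂ) * (-Complex.I) * ξ with hηdef
  have hηim : η.im = -((Real.pi / (2 * Real.log R)) * ξ.re) := by
    rw [hηdef, mul_assoc, Complex.im_ofReal_mul]
    have : (-Complex.I * ξ).im = -ξ.re := by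
      simp [Complex.mul_im]
    rw [this]; ring
  have hξre : |ξ.re| < Real.log R := by
    rw [Complex.log_re]
    rw [abs_lt]
    constructor
    · have := Real.log_lt_log (by positivity) h1
      rwa [one_div, Real.log_inv] at this
    · exact (Real.log_lt_log_iff hwpos hR0).2 h2 |>.trans_le le_rfl
  have hηbound : |η.im| < Real.pi / 2 := by
    rw [hηim, abs_neg, abs_mul]
    have hπ : 0 < Real.pi := Real.pi_pos
    have h4 : |Real.pi / (2 * Real.log R)| = Real.pi / (2 * Real.log R) :=
      abs_of_pos (by positivity)
    rw [h4]
    calc Real.pi / (2 * Real.log R) * |ξ.re|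
        < Real.pi / (2 * Real.log R) * Real.log R :=
          mul_lt_mul_of_pos_left hξre (by positivity)
      _ = Real.pi / 2 := by field_simp
  have hπ2 : Real.pi / 2 < Real.pi := by linarith [Real.pi_pos]
  refine ⟨Complex.I * Complex.exp η, ?_, ?_⟩
  · have : (Complex.I * Complex.exp η).im = (Complex.exp η).re := by
      simp [Complex.mul_im]
    rw [this, Complex.exp_re]
    have hcos : 0 < Real.cos η.im := by
      apply Real.cos_pos_of_mem_Ioo
      constructor
      · rw [abs_lt] at hηbound; linarith [hηbound.1]
      · rw [abs_lt] at hηbound; linarith [hηbound.2]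
    positivity
  · rw [pmap]
    have hdiv : (Complex.I * Complex.exp η) / Complex.I = Complex.exp η := by
      rw [mul_comm, mul_div_assoc, div_self Complex.I_ne_zero, mul_one]
    rw [hdiv, Complex.log_exp (by rw [abs_lt] at hηbound; linarith [hηbound.1])
      (by rw [abs_lt] at hηbound; linarith [hηbound.2])]
    have hc : (2 * Complex.I * (Real.log R : ℂ) / (Real.pi : ℂ)) * η = ξ := by
      rw [hηdef]
      have haC : ((Real.log R : ℝ) : ℂ) ≠ 0 := Complex.ofReal_ne_zero.2 (ne_of_gt ha)
      have hπC : ((Real.pi : ℝ) : ℂ) ≠ 0 := Complex.ofReal_ne_zero.2 Real.pi_ne_zero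
      push_cast
      field_simp
      linear_combination (-ξ) * Complex.I_sq
    rw [hc, hξdef, Complex.exp_log hw0]


open Set Bornology in
lemma vanishes_on_ne {Φ : ℂ × ℂ → ℂ}
    (hΦ : DifferentiableOn ℂ Φ {p : ℂ × ℂ | p.1 ≠ p.2})
    (hvan : ∀ z : ℂ, 0 < z.im → Φ (z, (starRingEnd ℂ) z) = 0) :
    ∀ p : ℂ × ℂ, p.1 ≠ p.2 → Φ p = 0 := by
  have hopen : IsOpen {p : ℂ × ℂ | p.1 ≠ p.2} := isOpen_ne_fun continuous_fst continuous_snd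
  have hdAt : ∀ p : ℂ × ℂ, p.1 ≠ p.2 → DifferentiableAt ℂ Φ p := fun p hp =>
    hΦ.differentiableAt (hopen.mem_nhds hp)
  -- Step 1: vanishing on horizontal complex slices
  have step1 : ∀ y : ℝ, 0 < y → ∀ ζ : ℂ,
      Φ (ζ + Complex.I * y, ζ - Complex.I * y) = 0 := by
    intro y hy
    have hy0 : (y : ℂ) ≠ 0 := Complex.ofReal_ne_zero.2 (ne_of_gt hy)
    set q : ℂ → ℂ := fun ζ => Φ (ζ + Complex.I * y, ζ - Complex.I * y) with hqdef
    have hne : ∀ ζ : ℂ, ζ + Complex.I * y ≠ ζ - Complex.I * y := by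
      intro ζ h
      have h2 : (2:ℂ) * (Complex.I * y) = 0 := by linear_combination h
      simp [Complex.I_ne_zero, hy0] at h2
    have hq : Differentiable ℂ q := by
      intro ζ
      exact (hdAt _ (hne ζ)).comp ζ
        (((differentiable_id.add_const _).prodMk (differentiable_id.sub_const _)) ζ)
    have hqa : AnalyticOnNhd ℂ q univ :=
      hq.differentiableOn.analyticOnNhd isOpen_univ
    have key : ∀ x : ℝ, q x = 0 := by
      intro x
      have him : ((x:ℂ) + Complex.I * y).im = y := by simp
      have hconj : (starRingEnd ℂ) ((x:ℂ) + Complex.I * y) = (x:ℂ) - Complex.I * y := by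
        simp [map_add, map_mul, Complex.conj_ofReal, Complex.conj_I]
        ring
      have := hvan ((x:ℂ) + Complex.I * y) (by rw [him]; exact hy)
      rw [hconj] at this
      exact this
    have htend : Filter.Tendsto (fun n : ℕ => ((1/(n+1:ℝ) : ℝ) : ℂ))
        Filter.atTop (nhdsWithin 0 {(0:ℂ)}ᶜ) := by
      apply tendsto_nhdsWithin_of_tendsto_nhds_of_eventually_within
      · have : Filter.Tendsto (fun n : ℕ => (1/(n+1:ℝ) : ℝ)) Filter.atTop (nhds 0) :=
          tendsto_one_div_add_atTop_nhds_zero_nat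
        exact (Complex.continuous_ofReal.tendsto 0).comp this |>.congr (fun n => rfl) |>.mono_right
          (by rw [Complex.ofReal_zero])
      · filter_upwards with n
        simp only [Set.mem_compl_iff, Set.mem_singleton_iff, Complex.ofReal_eq_zero]
        positivity
    have hfreq : ∃ᶠ ζ in nhdsWithin 0 {(0:ℂ)}ᶜ, q ζ = 0 :=
      htend.frequently (Filter.Frequently.of_forall fun n => key _)
    intro ζ
    exact hqa.eqOn_zero_of_preconnected_of_frequently_eq_zero isPreconnected_univ
      (mem_univ 0) hfreq (mem_univ ζ)
  -- Step 2: vanishing for all nonzero η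
  have step2 : ∀ ζ η : ℂ, η ≠ 0 → Φ (ζ + Complex.I * η, ζ - Complex.I * η) = 0 := by
    intro ζ η hη
    set r : ℂ → ℂ := fun η => Φ (ζ + Complex.I * η, ζ - Complex.I * η) with hrdef
    have hne : ∀ η : ℂ, η ≠ 0 → ζ + Complex.I * η ≠ ζ - Complex.I * η := by
      intro η hη h
      have h2 : (2:ℂ) * (Complex.I * η) = 0 := by linear_combination h
      simp [Complex.I_ne_zero, hη] at h2
    have hr : DifferentiableOn ℂ r {(0:ℂ)}ᶜ := by
      intro η hη
      apply DifferentiableAt.differentiableWithinAt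
      exact (hdAt _ (hne η hη)).comp η
        (((differentiable_const ζ).add ((differentiable_const Complex.I).mul differentiable_id)).prodMk
          ((differentiable_const ζ).sub ((differentiable_const Complex.I).mul differentiable_id)) η)
    have hra : AnalyticOnNhd ℂ r {(0:ℂ)}ᶜ := hr.analyticOnNhd isOpen_compl_singleton
    have hpre : IsPreconnected {(0:ℂ)}ᶜ :=
      (isConnected_compl_singleton_of_one_lt_rank
        (rank_real_complex ▸ Nat.one_lt_ofNat) (0:ℂ)).isPreconnected
    have h1mem : (1:ℂ) ∈ ({(0:ℂ)}ᶜ : Set ℂ) := by simp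
    have htend : Filter.Tendsto (fun n : ℕ => ((1 + 1/(n+1:ℝ) : ℝ) : ℂ))
        Filter.atTop (nhdsWithin 1 {(1:ℂ)}ᶜ) := by
      apply tendsto_nhdsWithin_of_tendsto_nhds_of_eventually_within
      · have h0 : Filter.Tendsto (fun n : ℕ => (1 + 1/(n+1:ℝ) : ℝ)) Filter.atTop (nhds 1) := by
          have := tendsto_one_div_add_atTop_nhds_zero_nat (𝕜 := ℝ)
          have := this.const_add (1:ℝ)
          simpa using this
        have h1 := (Complex.continuous_ofReal.tendsto 1).comp h0
        simp only [Function.comp_def] at h1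
        push_cast at h1 ⊢
        convert h1 using 2 <;> push_cast <;> ring
      · filter_upwards with n
        simp only [Set.mem_compl_iff, Set.mem_singleton_iff]
        intro h
        rw [← Complex.ofReal_one, Complex.ofReal_inj] at h
        have : (0:ℝ) < 1/(n+1:ℝ) := by positivity
        linarith
    have hfreq : ∃ᶠ x in nhdsWithin 1 {(1:ℂ)}ᶜ, r x = 0 := by
      apply htend.frequently
      apply Filter.Frequently.of_forall
      intro n
      exact step1 (1 + 1/(n+1:ℝ)) (by positivity) ζ
    exact hra.eqOn_zero_of_preconnected_of_frequently_eq_zero hpre h1mem hfreq hη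
  intro p hp
  have hη : (p.1 - p.2) / (2 * Complex.I) ≠ 0 := by
    apply div_ne_zero (sub_ne_zero.2 hp)
    simp [Complex.I_ne_zero]
  have h1 : p.1 = (p.1 + p.2)/2 + Complex.I * ((p.1 - p.2) / (2 * Complex.I)) := by
    field_simp
    ring_nf
  have h2 : p.2 = (p.1 + p.2)/2 - Complex.I * ((p.1 - p.2) / (2 * Complex.I)) := by
    field_simp
    ring_nf
  have := step2 ((p.1 + p.2)/2) ((p.1 - p.2) / (2 * Complex.I)) hη
  rw [← h1, ← h2] at this
  simpa using this


open Set Bornology in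
lemma fiber_constant {F : ℂ × ℂ → ℂ}
    (hF : DifferentiableOn ℂ F {p : ℂ × ℂ | p.1 ≠ p.2})
    {m : ℝ} (hm : 1 < m)
    (hinv : ∀ z w : ℂ, z ≠ w → F ((m:ℂ) * z, (m:ℂ) * w) = F (z, w))
    {c : ℂ} (hc : c ≠ 1) {ζ₁ ζ₂ : ℂ} (h1 : ζ₁ ≠ 0) (h2 : ζ₂ ≠ 0) :
    F (ζ₁, c * ζ₁) = F (ζ₂, c * ζ₂) := by
  have hopen : IsOpen {p : ℂ × ℂ | p.1 ≠ p.2} := isOpen_ne_fun continuous_fst continuous_snd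
  have hdAt : ∀ p : ℂ × ℂ, p.1 ≠ p.2 → DifferentiableAt ℂ F p := fun p hp =>
    hF.differentiableAt (hopen.mem_nhds hp)
  set h : ℂ → ℂ := fun ξ => F (Complex.exp ξ, c * Complex.exp ξ) with hhdef
  have hneq : ∀ x : ℂ, x ≠ 0 → x ≠ c * x := by
    intro x hx hcx
    apply hc
    have : (1:ℂ) * x = c * x := by rw [one_mul]; exact hcx
    exact (mul_right_cancel₀ hx this).symm
  have hdiff : Differentiable ℂ h := by
    intro ξ
    exact (hdAt _ (hneq _ (Complex.exp_ne_zero ξ))).comp ξ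
      ((Complex.differentiable_exp.prodMk (Complex.differentiable_exp.const_mul c)) ξ)
  have hm0 : 0 < m := lt_trans one_pos hm
  set L : ℝ := Real.log m with hLdef
  have hL : 0 < L := Real.log_pos hm
  have hp1 : Function.Periodic h (L : ℂ) := by
    intro ξ
    have he : Complex.exp (ξ + (L:ℂ)) = (m:ℂ) * Complex.exp ξ := by
      rw [Complex.exp_add, mul_comm]
      congr 1
      rw [← Complex.ofReal_exp, hLdef, Real.exp_log hm0]
    simp only [hhdef, he]
    have := hinv (Complex.exp ξ) (c * Complex.exp ξ) (hneq _ (Complex.exp_ne_zero ξ))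
    rw [← this]
    ring_nf
  have hp2 : Function.Periodic h (2 * Real.pi * Complex.I) := by
    intro ξ
    simp only [hhdef, Complex.exp_periodic ξ]
  -- boundedness via the fundamental domain
  set K : Set ℂ := {ξ : ℂ | ξ.re ∈ Set.Icc 0 L ∧ ξ.im ∈ Set.Icc 0 (2*Real.pi)} with hKdef
  have hKcl : IsClosed K := by
    apply IsClosed.inter
    · exact isClosed_Icc.preimage Complex.continuous_re
    · exact isClosed_Icc.preimage Complex.continuous_im
  have hKbd : IsBounded K := by
    apply (Metric.isBounded_closedBall (x := (0:ℂ)) (r := L + 2*Real.pi)).subset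
    intro ξ hξ
    obtain ⟨hre, him⟩ := hξ
    rw [Metric.mem_closedBall, dist_zero_right]
    calc ‖ξ‖ = ‖ξ‖ := rfl
      _ ≤ |ξ.re| + |ξ.im| := Complex.norm_le_abs_re_add_abs_im ξ
      _ ≤ L + 2*Real.pi := by
          rw [_root_.abs_of_nonneg hre.1, _root_.abs_of_nonneg him.1]
          exact add_le_add hre.2 him.2
  have hKcomp : IsCompact K := Metric.isCompact_of_isClosed_isBounded hKcl hKbd
  have hrange : Set.range h ⊆ h '' K := by
    rintro _ ⟨ξ, rfl⟩
    set m' : ℤ := ⌊ξ.re / L⌋ with hm'def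
    set n' : ℤ := ⌊ξ.im / (2*Real.pi)⌋ with hn'def
    set ξ' : ℂ := ξ - ((m' * L : ℝ) : ℂ) - ((n' * (2*Real.pi) : ℝ) : ℂ) * Complex.I with hξ'def
    refine ⟨ξ', ?_, ?_⟩
    · constructor
      · have hre : ξ'.re = ξ.re - m' * L := by
          simp [hξ'def, Complex.sub_re]
        rw [hre]
        constructor
        · exact Int.sub_floor_div_mul_nonneg ξ.re hL
        · exact le_of_lt (Int.sub_floor_div_mul_lt ξ.re hL)
      · have him : ξ'.im = ξ.im - n' * (2*Real.pi) := by
          simp [hξ'def, Complex.sub_im]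
        rw [him]
        have h2π : (0:ℝ) < 2*Real.pi := by positivity
        constructor
        · exact Int.sub_floor_div_mul_nonneg ξ.im h2π
        · exact le_of_lt (Int.sub_floor_div_mul_lt ξ.im h2π)
    · have e1 : ξ' = ξ - (m' : ℂ) * (L : ℂ) - (n' : ℂ) * (2 * Real.pi * Complex.I) := by
        rw [hξ'def]; push_cast; ring
      rw [e1, hp2.sub_int_mul_eq n', hp1.sub_int_mul_eq m']
  have hbd : IsBounded (Set.range h) :=
    ((hKcomp.image hdiff.continuous).isBounded).subset hrange
  have hconst := hdiff.apply_eq_apply_of_bounded hbd (Complex.log ζ₁) (Complex.log ζ₂)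
  simp only [hhdef] at hconst
  rwa [Complex.exp_log h1, Complex.exp_log h2] at hconst

end MemAAux


open Complex in
/-- Characterization of `𝒜(A_R)` (equation (1.5) of Theorem 1.8): `f` lifts under
the universal covering `π(z) = exp((2i log R/π) Log(z/i))` of the annulus
`A_R = {1/R < |w| < R}` to `F(z, conj z)` for some `F ∈ H(G)` iff
`f(w) = g(-i tan((π/(2 log R)) log |w|))` for some entire `g`. -/
theorem mem_A_annulus_iff (R : ℝ) (hR : 1 < R) (f : ℂ → ℂ) :
    (∃ F : ℂ × ℂ → ℂ, DefinesHolomorphicOnG F ∧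
      ∀ z : ℂ, 0 < z.im →
        f (Complex.exp ((2 * Complex.I * (Real.log R : ℂ) / (Real.pi : ℂ)) *
            Complex.log (z / Complex.I))) = F (z, (starRingEnd ℂ) z)) ↔
    (∃ g : ℂ → ℂ, Differentiable ℂ g ∧
      ∀ w : ℂ, 1 / R < ‖w‖ → ‖w‖ < R →
        f w = g (-Complex.I *
          (Real.tan ((Real.pi / (2 * Real.log R)) * Real.log (‖w‖)) : ℂ))) := by
  have ha : 0 < Real.log R := Real.log_pos hR
  constructor
  · -- hard direction
    rintro ⟨F, ⟨hF1, -, -⟩, hlift⟩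
    have hlift' : ∀ z : ℂ, 0 < z.im → f (MemAAux.pmap R z) = F (z, (starRingEnd ℂ) z) :=
      fun z hz => hlift z hz
    set μr : ℝ := Real.exp (Real.pi ^ 2 / Real.log R) with hμdef
    have hμ : 1 < μr := by
      rw [hμdef, ← Real.exp_zero]
      exact Real.exp_lt_exp.2 (by positivity)
    have hμ0 : (0:ℝ) < μr := lt_trans one_pos hμ
    have hμC : ((μr : ℝ) : ℂ) ≠ 0 := Complex.ofReal_ne_zero.2 (ne_of_gt hμ0)
    -- invariance on the graph of conjugation
    have hinvH : ∀ z : ℂ, 0 < z.im →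
        F ((μr:ℂ) * z, (starRingEnd ℂ) ((μr:ℂ) * z)) = F (z, (starRingEnd ℂ) z) := by
      intro z hz
      have hzim : 0 < ((μr:ℂ) * z).im := by
        rw [Complex.im_ofReal_mul]
        positivity
      have e1 := hlift' ((μr:ℂ) * z) hzim
      have e2 := hlift' z hz
      rw [MemAAux.pmap_deck hR hz] at e1
      rw [← e1, ← e2]
    -- the difference function
    set Φ : ℂ × ℂ → ℂ := fun p => F ((μr:ℂ) * p.1, (μr:ℂ) * p.2) - F p with hΦdef
    have hΦdiff : DifferentiableOn ℂ Φ {p : ℂ × ℂ | p.1 ≠ p.2} := by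
      apply DifferentiableOn.sub _ hF1
      apply DifferentiableOn.comp (t := {p : ℂ × ℂ | p.1 ≠ p.2}) hF1
      · apply DifferentiableOn.prodMk
        · exact (differentiable_const _).mul differentiable_fst |>.differentiableOn
        · exact (differentiable_const _).mul differentiable_snd |>.differentiableOn
      · intro p hp
        simp only [Set.mem_setOf_eq] at hp ⊢
        exact fun h => hp (mul_left_cancel₀ hμC h)
    have hΦvan : ∀ z : ℂ, 0 < z.im → Φ (z, (starRingEnd ℂ) z) = 0 := by
      intro z hz
      have hconj : (starRingEnd ℂ) ((μr:ℂ) * z) = (μr:ℂ) * (starRingEnd ℂ) z := by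
        rw [map_mul, Complex.conj_ofReal]
      have := hinvH z hz
      rw [hconj] at this
      simp only [hΦdef]
      rw [sub_eq_zero]
      exact this
    have hμinv : ∀ z w : ℂ, z ≠ w → F ((μr:ℂ) * z, (μr:ℂ) * w) = F (z, w) := by
      intro z w hzw
      have := MemAAux.vanishes_on_ne hΦdiff hΦvan (z, w) hzw
      simp only [hΦdef] at this
      exact sub_eq_zero.1 this
    -- define g
    refine ⟨fun ζ => F (ζ + 1, ζ - 1), ?_, ?_⟩
    · intro ζ
      have hne : ζ + 1 ≠ ζ - 1 := by
        intro h
        have : (2:ℂ) = 0 := by linear_combination h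
        norm_num at this
      have hopen : IsOpen {p : ℂ × ℂ | p.1 ≠ p.2} := isOpen_ne_fun continuous_fst continuous_snd
      exact (hF1.differentiableAt (hopen.mem_nhds hne)).comp ζ
        (((differentiable_id.add_const 1).prodMk (differentiable_id.sub_const 1)) ζ)
    · intro w hw1 hw2
      obtain ⟨z, hz, hzw⟩ := MemAAux.exists_lift hR hw1 hw2
      rw [← hzw]
      rw [hlift' z hz, MemAAux.tan_identity hR hz]
      -- now pure fiber constancy
      have hz0 : z ≠ 0 := by
        intro h; rw [h] at hz; simp at hz
      have hzc : z ≠ (starRingEnd ℂ) z := by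
        intro h
        have := (Complex.conj_eq_iff_im).1 h.symm
        rw [this] at hz; exact lt_irrefl 0 hz
      have hden : z - (starRingEnd ℂ) z ≠ 0 := sub_ne_zero.2 hzc
      set s : ℂ := (z + (starRingEnd ℂ) z) / (z - (starRingEnd ℂ) z) with hsdef
      set c : ℂ := (starRingEnd ℂ) z / z with hcdef
      have hcz : c * z = (starRingEnd ℂ) z := div_mul_cancel₀ _ hz0
      have hc1 : c ≠ 1 := by
        intro h
        rw [hcdef, div_eq_one_iff_eq hz0] at h
        exact hzc h.symm
      have hs1eq : s + 1 = 2 * z / (z - (starRingEnd ℂ) z) := by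
        rw [hsdef]; field_simp; ring
      have hs1 : s + 1 ≠ 0 := by
        rw [hs1eq]
        exact div_ne_zero (by simpa using hz0) hden
      have hkey : c * (s + 1) = s - 1 := by
        rw [hcdef, hsdef]
        field_simp
        ring
      calc F (z, (starRingEnd ℂ) z) = F (z, c * z) := by rw [hcz]
        _ = F (s + 1, c * (s + 1)) :=
            MemAAux.fiber_constant hF1 hμ hμinv hc1 hz0 hs1
        _ = F (s + 1, s - 1) := by rw [hkey]
        _ = (fun ζ => F (ζ + 1, ζ - 1)) s := by norm_num
  · -- easy direction
    rintro ⟨g, hg, hgf⟩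
    refine ⟨fun p => g ((p.1 + p.2) / (p.1 - p.2)), ⟨?_, ⟨fun p => g ((p.1 * p.2 + 1) / (p.1 * p.2 - 1)), ?_, ?_⟩, ⟨fun p => g ((1 + p.1 * p.2) / (1 - p.1 * p.2)), ?_, ?_⟩⟩, ?_⟩
    · apply hg.comp_differentiableOn
      simp only [div_eq_mul_inv]
      apply DifferentiableOn.mul
      · exact (differentiable_fst.add differentiable_snd).differentiableOn
      · exact ((differentiable_fst.sub differentiable_snd).differentiableOn).inv
          (fun p hp => sub_ne_zero.2 hp)
    · apply hg.comp_differentiableOn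
      simp only [div_eq_mul_inv]
      apply DifferentiableOn.mul
      · exact ((differentiable_fst.mul differentiable_snd).add_const 1).differentiableOn
      · exact (((differentiable_fst.mul differentiable_snd).sub_const 1).differentiableOn).inv
          (fun p hp => sub_ne_zero.2 hp)
    · intro z v hv hzv
      simp only
      congr 1
      have h1 : z - 1/v ≠ 0 := by
        rw [sub_ne_zero]
        intro h
        apply hzv
        rw [h]
        field_simp
      field_simp
      try ring
    · apply hg.comp_differentiableOn
      simp only [div_eq_mul_inv]
      apply DifferentiableOn.mul
      · exact ((differentiable_fst.mul differentiable_snd).const_add 1).differentiableOn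
      · exact (((differentiable_fst.mul differentiable_snd).const_sub 1).differentiableOn).inv
          (fun p hp => sub_ne_zero.2 (fun h => hp h.symm))
    · intro u w hu huw
      simp only
      congr 1
      have h1 : (1:ℂ) - u * w ≠ 0 := sub_ne_zero.2 (fun h => huw h.symm)
      have h2 : 1/u - w ≠ 0 := by
        rw [sub_ne_zero]
        intro h
        apply huw
        rw [← h]
        field_simp
      field_simp
      try ring
    · intro z hz
      obtain ⟨hb1, hb2⟩ := MemAAux.pmap_mem_annulus hR hz
      have := hgf (MemAAux.pmap R z) hb1 hb2
      have e : f (MemAAux.pmap R z) = g (-Complex.I *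
          (Real.tan ((Real.pi / (2 * Real.log R)) *
            Real.log (‖MemAAux.pmap R z‖)) : ℂ)) := this
      rw [MemAAux.tan_identity hR hz] at e
      exact e
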